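/- Let N ∈ ℕ and 0 < p < 1, and define w(x) = binom(N,x) p^x (1-p)^{N-x} and h(n) = ((-1)^n n!/(-N)_n) ((1-p)/p)^n. Then the (N+1)×(N+1) matrix B with entries B_{n,x} = sqrt(w(x))/sqrt(h(n)) · K_n(x;p,N) is orthogonal, i.e. B Bᵀ = I. -/

import Mathlib

open Finset Polynomial

/-- Krawtchouk polynomial `K_n(x;p,N) = ∑_k ((-n)_k (-x)_k)/(k! (-N)_k) p^{-k}`. -/
noncomputable def kraw (N n x : ℕ) (p : ℝ) : ℝ :=
  ∑ k ∈ Finset.range (min n x + 1),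
    ((ascPochhammer ℝ k).eval (-(n : ℝ)) * (ascPochhammer ℝ k).eval (-(x : ℝ))) /
      ((k.factorial : ℝ) * (ascPochhammer ℝ k).eval (-(N : ℝ))) * p⁻¹ ^ k

/-- Weight `w(x;p,N) = binom(N,x) p^x (1-p)^{N-x}` of the Krawtchouk polynomials. -/
noncomputable def krawW (N x : ℕ) (p : ℝ) : ℝ := (N.choose x : ℝ) * p ^ x * (1 - p) ^ (N - x)

/-- Squared norm `h(n;p,N) = ((-1)^n n!/(-N)_n) ((1-p)/p)^n` of the Krawtchouk polynomials. -/
noncomputable def krawH (N n : ℕ) (p : ℝ) : ℝ :=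
  ((-1 : ℝ) ^ n * (n.factorial : ℝ) / (ascPochhammer ℝ n).eval (-(N : ℝ))) * ((1 - p) / p) ^ n

/-- The matrix `B_{n,x} = sqrt(w(x))/sqrt(h(n)) · K_n(x;p,N)`. -/
noncomputable def krawB (N : ℕ) (p : ℝ) : Matrix (Fin (N + 1)) (Fin (N + 1)) ℝ :=
  Matrix.of fun n x => Real.sqrt (krawW N x p) / Real.sqrt (krawH N n p) * kraw N n x p

lemma poch_neg (a k : ℕ) :
    (ascPochhammer ℝ k).eval (-(a:ℝ)) = (-1:ℝ)^k * (a.descFactorial k : ℝ) := by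
  rw [ascPochhammer_eval_neg_eq_descPochhammer, descPochhammer_eval_eq_descFactorial]

/-- Generating polynomial `(1 - ((1-p)/p) t)^x (1+t)^{N-x}` of the Krawtchouk polynomials. -/
noncomputable def krawG (N x : ℕ) (p : ℝ) : Polynomial ℝ :=
  (1 - C ((1-p)/p) * X) ^ x * (1 + X) ^ (N - x)

lemma krawG_eq (N x : ℕ) (p : ℝ) (hp : p ≠ 0) (hx : x ≤ N) :
    krawG N x p = ∑ k ∈ range (x+1),
      (x.choose k : ℝ[X]) * C ((-p⁻¹)^k) * (X^k * (1 + X)^(N-k)) := by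
  have h1 : (1 - C ((1-p)/p) * X : ℝ[X]) = C (-p⁻¹) * X + (1 + X) := by
    have : (1-p)/p = p⁻¹ - 1 := by field_simp
    rw [this]
    simp [map_sub, sub_mul]
    ring
  rw [krawG, h1, add_pow, Finset.sum_mul]
  refine Finset.sum_congr rfl fun k hk => ?_
  simp only [Finset.mem_range, Nat.lt_succ_iff] at hk
  rw [mul_pow, ← C_pow]
  have h2 : ((1:ℝ[X]) + X)^(x-k) * (1+X)^(N-x) = (1+X)^(N-k) := by
    rw [← pow_add]
    congr 1
    omega
  rw [← h2]
  ring

lemma krawG_coeff (N n x : ℕ) (p : ℝ) (hp : p ≠ 0) (hx : x ≤ N) :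
    (krawG N x p).coeff n = ∑ k ∈ range (N+1),
      (x.choose k : ℝ) * (-p⁻¹)^k * (if k ≤ n then ((N-k).choose (n-k) : ℝ) else 0) := by
  rw [krawG_eq N x p hp hx, finset_sum_coeff]
  have hterm : ∀ k, ((x.choose k : ℝ[X]) * C ((-p⁻¹)^k) * (X^k * (1 + X)^(N-k))).coeff n
      = (x.choose k : ℝ) * (-p⁻¹)^k * (if k ≤ n then ((N-k).choose (n-k) : ℝ) else 0) := by
    intro k
    have e : ((x.choose k : ℝ[X]) * C ((-p⁻¹)^k) * (X^k * (1 + X)^(N-k)))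
        = C ((x.choose k : ℝ) * (-p⁻¹)^k) * ((1 + X)^(N-k) * X^k) := by
      rw [map_mul, C_eq_natCast]; ring
    rw [e, coeff_C_mul, coeff_mul_X_pow', coeff_one_add_X_pow]
  rw [Finset.sum_congr rfl fun k _ => hterm k]
  refine Finset.sum_subset (by gcongr <;> omega) fun k _ hk => ?_
  simp only [Finset.mem_range, Nat.lt_succ_iff, not_le] at hk
  rw [Nat.choose_eq_zero_of_lt hk]
  simp

lemma kraw_eq (N n x : ℕ) (p : ℝ) (hp : p ≠ 0) (hx : x ≤ N) (hn : n ≤ N) :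
    (N.choose n : ℝ) * kraw N n x p = ∑ k ∈ range (N+1),
      (x.choose k : ℝ) * (-p⁻¹)^k * (if k ≤ n then ((N-k).choose (n-k) : ℝ) else 0) := by
  rw [kraw, Finset.mul_sum]
  rw [show Finset.range (N+1)
      = Finset.range (min n x + 1) ∪ (Finset.range (N+1) \ Finset.range (min n x + 1)) by
    rw [Finset.union_sdiff_of_subset]; gcongr <;> omega]
  rw [Finset.sum_union (Finset.disjoint_sdiff)]
  have h2 : ∀ k ∈ Finset.range (N+1) \ Finset.range (min n x + 1),
      (x.choose k : ℝ) * (-p⁻¹)^k * (if k ≤ n then ((N-k).choose (n-k) : ℝ) else 0) = 0 := by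
    intro k hk
    simp only [Finset.mem_sdiff, Finset.mem_range, Nat.lt_succ_iff, not_le] at hk
    rcases lt_or_ge x k with h | h
    · rw [Nat.choose_eq_zero_of_lt h]; simp
    · rw [if_neg (by omega), mul_zero]
  rw [Finset.sum_eq_zero h2, add_zero]
  refine Finset.sum_congr rfl fun k hk => ?_
  simp only [Finset.mem_range, Nat.lt_succ_iff, le_min_iff] at hk
  obtain ⟨hkn, hkx⟩ := hk
  have hkN : k ≤ N := hkn.trans hn
  have key : (N.choose n : ℝ) * n.choose k = N.choose k * (N-k).choose (n-k) := by
    exact_mod_cast congrArg (Nat.cast (R := ℝ)) (Nat.choose_mul (n := N) hkn)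
  have hdf : ∀ a : ℕ, (a.descFactorial k : ℝ) = (k.factorial : ℝ) * a.choose k := by
    intro a
    exact_mod_cast congrArg (Nat.cast (R := ℝ)) (Nat.descFactorial_eq_factorial_mul_choose a k)
  rw [if_pos hkn, poch_neg, poch_neg, poch_neg, hdf n, hdf x, hdf N, neg_pow p⁻¹]
  have hNck : ((N.choose k : ℝ)) ≠ 0 := Nat.cast_ne_zero.mpr (Nat.choose_pos hkN).ne'
  have hfac : ((k.factorial : ℝ)) ≠ 0 := Nat.cast_ne_zero.mpr k.factorial_ne_zero
  have hden : (k.factorial : ℝ) * ((-1:ℝ)^k * ((k.factorial : ℝ) * (N.choose k : ℝ))) ≠ 0 :=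
    mul_ne_zero hfac (mul_ne_zero (pow_ne_zero _ (by norm_num)) (mul_ne_zero hfac hNck))
  rw [div_mul_eq_mul_div, ← mul_div_assoc, div_eq_iff hden]
  linear_combination ((-1:ℝ)^k * (-1:ℝ)^k * (k.factorial:ℝ)^2 * (x.choose k : ℝ) * p⁻¹^k) * key

lemma coeff_one_add_C_mul_X_pow {S : Type*} [CommRing S] (c : S) (N m : ℕ) :
    ((1 + C c * X)^N).coeff m = (N.choose m : S) * c^m := by
  rw [add_comm, add_pow, finset_sum_coeff]
  have hterm : ∀ j, (((C c * X)^j * 1^(N-j) * (N.choose j : S[X]))).coeff m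
      = if j = m then (N.choose m : S) * c^m else 0 := by
    intro j
    have e : ((C c * X)^j * 1^(N-j) * (N.choose j : S[X]))
        = C ((N.choose j : S) * c^j) * X^j := by
      rw [map_mul, C_pow, C_eq_natCast]; ring
    rw [e, coeff_C_mul, coeff_X_pow]
    split_ifs with h h2 h2
    · rw [h2, mul_one]
    · exact absurd h.symm h2
    · exact absurd h2.symm h
    · rw [mul_zero]
  rw [Finset.sum_congr rfl fun j _ => hterm j, Finset.sum_ite_eq' (Finset.range (N+1)) m]
  split_ifs with h
  · rfl
  · simp only [Finset.mem_range, Nat.lt_succ_iff, not_le] at h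
    rw [Nat.choose_eq_zero_of_lt h]; simp

lemma bivar (N : ℕ) (p : ℝ) (hp : p ≠ 0) :
    ∑ x ∈ range (N+1), C (C (krawW N x p)) * (krawG N x p).map C * C (krawG N x p)
      = (1 + C (C ((1-p)/p)) * C X * X) ^ N := by
  set r : ℝ := (1-p)/p with hr
  set a : Polynomial (Polynomial ℝ) :=
    C (C p) * (1 - C (C r) * X) * (1 - C (C r) * C X) with ha
  set b : Polynomial (Polynomial ℝ) :=
    (1 - C (C p)) * (1 + X) * (1 + C X) with hb
  have hq : (C (C (1-p)) : Polynomial (Polynomial ℝ)) = 1 - C (C p) := by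
    simp [map_sub]
  have hab : a + b = 1 + C (C r) * C X * X := by
    have h : p * r = 1 - p := by rw [hr]; field_simp
    have h' : (C (C p) : Polynomial (Polynomial ℝ)) * C (C r) = 1 - C (C p) := by
      rw [← map_mul, ← map_mul, h]; simp [map_sub]
    rw [ha, hb]
    linear_combination (C (C r) * C X * X - X - C X - C X * X) * h'
  rw [← hab, add_pow]
  refine Finset.sum_congr rfl fun x hx => ?_
  simp only [Finset.mem_range, Nat.lt_succ_iff] at hx
  rw [krawW, krawG, ha, hb]
  have e1 : ((1 - C r * X) ^ x * (1 + X) ^ (N - x)).map (C : ℝ →+* Polynomial ℝ)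
      = (1 - C (C r) * X) ^ x * (1 + X) ^ (N-x) := by
    simp [Polynomial.map_pow, Polynomial.map_mul, Polynomial.map_sub, Polynomial.map_add,
      Polynomial.map_one, map_C, map_X]
  have e2 : (C ((1 - C r * X) ^ x * (1 + X) ^ (N - x)) : Polynomial (Polynomial ℝ))
      = (1 - C (C r) * C X) ^ x * (1 + C X) ^ (N-x) := by
    simp [map_mul, map_pow, map_sub, map_add, map_one]
  have e3 : (C (C ((N.choose x : ℝ) * p ^ x * (1-p) ^ (N-x))) : Polynomial (Polynomial ℝ))
      = (N.choose x : Polynomial (Polynomial ℝ)) * C (C p) ^ x * (1 - C (C p)) ^ (N-x) := by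
    simp only [map_mul, map_pow, map_natCast, hq]
  rw [e1, e2, e3]
  simp only [mul_pow]
  ring

lemma krawG_coeff_kraw (N n x : ℕ) (p : ℝ) (hp : p ≠ 0) (hx : x ≤ N) (hn : n ≤ N) :
    (krawG N x p).coeff n = (N.choose n : ℝ) * kraw N n x p := by
  rw [krawG_coeff N n x p hp hx, ← kraw_eq N n x p hp hx hn]

lemma krawH_eq (N n : ℕ) (p : ℝ) (hn : n ≤ N) :
    krawH N n p = ((1-p)/p)^n / (N.choose n : ℝ) := by
  rw [krawH, poch_neg, Nat.descFactorial_eq_factorial_mul_choose]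
  have h1 : ((-1:ℝ))^n ≠ 0 := pow_ne_zero _ (by norm_num)
  have h2 : ((n.factorial : ℝ)) ≠ 0 := Nat.cast_ne_zero.mpr n.factorial_ne_zero
  push_cast
  rw [mul_div_mul_left _ _ h1, div_mul_cancel_left₀ h2, inv_mul_eq_div]

lemma orth (N m n : ℕ) (p : ℝ) (hp0 : 0 < p) (hp1 : p < 1) (hm : m ≤ N) (hn : n ≤ N) :
    ∑ x ∈ range (N+1), krawW N x p * (kraw N m x p * kraw N n x p)
      = if m = n then krawH N n p else 0 := by
  have hp : p ≠ 0 := hp0.ne'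
  set r : ℝ := (1-p)/p with hr
  have h1 : ((∑ x ∈ range (N+1), C (C (krawW N x p)) * (krawG N x p).map C
        * C (krawG N x p)).coeff m).coeff n
      = ∑ x ∈ range (N+1), krawW N x p * ((krawG N x p).coeff m * (krawG N x p).coeff n) := by
    rw [finset_sum_coeff, finset_sum_coeff]
    refine Finset.sum_congr rfl fun x _ => ?_
    have e : C (C (krawW N x p)) * (krawG N x p).map C * C (krawG N x p)
        = (krawG N x p).map C * C (C (krawW N x p) * (krawG N x p)) := by
      rw [map_mul]; ring
    rw [e, coeff_mul_C, coeff_map, coeff_C_mul, coeff_C_mul]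
    ring
  have h2 : (((1 + C (C r) * C X * X : Polynomial (Polynomial ℝ))^N).coeff m).coeff n
      = if n = m then (N.choose m : ℝ) * r^m else 0 := by
    rw [show (C (C r) * C X : Polynomial (Polynomial ℝ)) = C (C r * X) from (map_mul C _ _).symm,
      coeff_one_add_C_mul_X_pow, mul_pow, ← C_pow, Polynomial.coeff_natCast_mul, coeff_C_mul,
      coeff_X_pow]
    split_ifs with h <;> simp
  have hcoef := congrArg (fun q : Polynomial (Polynomial ℝ) => (q.coeff m).coeff n) (bivar N p hp)
  simp only [← hr] at hcoef
  rw [h1, h2] at hcoef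
  have hG : ∀ x ∈ range (N+1), krawW N x p * ((krawG N x p).coeff m * (krawG N x p).coeff n)
      = (krawW N x p * (kraw N m x p * kraw N n x p)) * ((N.choose m : ℝ) * (N.choose n : ℝ)) := by
    intro x hx
    simp only [Finset.mem_range, Nat.lt_succ_iff] at hx
    rw [krawG_coeff_kraw N m x p hp hx hm, krawG_coeff_kraw N n x p hp hx hn]
    ring
  rw [Finset.sum_congr rfl hG, ← Finset.sum_mul] at hcoef
  have hcm : ((N.choose m : ℝ)) ≠ 0 := Nat.cast_ne_zero.mpr (Nat.choose_pos hm).ne'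
  have hcn : ((N.choose n : ℝ)) ≠ 0 := Nat.cast_ne_zero.mpr (Nat.choose_pos hn).ne'
  refine mul_right_cancel₀ (b := (N.choose m : ℝ) * (N.choose n : ℝ)) (mul_ne_zero hcm hcn) ?_
  rw [hcoef]
  rcases eq_or_ne m n with h | h
  · subst h
    rw [if_pos rfl, if_pos rfl, krawH_eq N m p hm, div_mul_eq_mul_div, eq_div_iff hcm]
    ring
  · rw [if_neg (Ne.symm h), if_neg h, zero_mul]

/-- The matrix `B_{n,x} = sqrt(w(x))/sqrt(h(n)) · K_n(x;p,N)` is orthogonal: `B Bᵀ = I`. -/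
theorem krawtchouk_matrix_orthogonal (N : ℕ) (p : ℝ) (hp0 : 0 < p) (hp1 : p < 1) :
    krawB N p * (krawB N p).transpose = 1 := by
  have hw : ∀ x : ℕ, 0 ≤ krawW N x p := fun x =>
    mul_nonneg (mul_nonneg (Nat.cast_nonneg _) (pow_nonneg hp0.le _))
      (pow_nonneg (by linarith) _)
  have hh : ∀ k : ℕ, k ≤ N → 0 < krawH N k p := fun k hk => by
    rw [krawH_eq N k p hk]
    exact div_pos (pow_pos (div_pos (by linarith) hp0) _)
      (Nat.cast_pos.mpr (Nat.choose_pos hk))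
  ext n m
  rw [Matrix.mul_apply, Matrix.one_apply]
  have hterm : ∀ x : Fin (N+1), krawB N p n x * (krawB N p).transpose x m
      = (fun y : ℕ => krawW N y p * (kraw N n y p * kraw N m y p)) (x : ℕ)
          * (1/(Real.sqrt (krawH N n p) * Real.sqrt (krawH N m p))) := by
    intro x
    simp only [krawB, Matrix.transpose_apply, Matrix.of_apply]
    have hs := Real.mul_self_sqrt (hw x)
    linear_combination (kraw N n x p * kraw N m x p /
      (Real.sqrt (krawH N n p) * Real.sqrt (krawH N m p))) * hs
  rw [Finset.sum_congr rfl (fun x _ => hterm x), ← Finset.sum_mul,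
    Fin.sum_univ_eq_sum_range (fun y : ℕ => krawW N y p * (kraw N n y p * kraw N m y p)) (N+1),
    orth N n m p hp0 hp1 (by omega) (by omega)]
  by_cases h : n = m
  · subst h
    rw [if_pos rfl, if_pos rfl]
    have hp := hh n (by omega)
    rw [Real.mul_self_sqrt hp.le, mul_one_div, div_self hp.ne']
  · rw [if_neg (fun hc => h (Fin.ext hc)), if_neg h, zero_mul]
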